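/- Lower bound on LP size in EHD Step 4: the set B^S ∪ extB^S contains the entire frame F of A; hence |B^S ∪ extB^S| ≥ |F|, so every LP solved in Step 4 has at least |F| structural variables. -/

import Mathlib

open scoped Classical
open Finset

noncomputable section

/-- The VRS (free-disposal convex) hull of a finite set of points in ℝ^m. -/
def vrs {m : ℕ} (S : Finset (Fin m → ℝ)) : Set (Fin m → ℝ) :=
  {z | ∃ l : (Fin m → ℝ) → ℝ, (∀ a, 0 ≤ l a) ∧ (∑ a ∈ S, l a) = 1 ∧
    ∀ k, z k ≤ ∑ a ∈ S, l a * a k}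

/-- The frame of `A`: the points of `A` that are extreme points of `vrs A`. -/
def frame {m : ℕ} (A : Finset (Fin m → ℝ)) : Finset (Fin m → ℝ) :=
  A.filter fun a => a ∈ Set.extremePoints ℝ (vrs A)

lemma vrs_mono {m : ℕ} {S T : Finset (Fin m → ℝ)} (h : S ⊆ T) : vrs S ⊆ vrs T := by
  rintro z ⟨l, hl0, hl1, hlk⟩
  refine ⟨fun a => if a ∈ S then l a else 0, fun a => ?_, ?_, fun k => ?_⟩
  · dsimp only
    split
    · exact hl0 a
    · exact le_rfl
  · simp only
    rw [Finset.sum_ite_mem, Finset.inter_eq_right.2 h, hl1]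
  · simp only
    calc z k ≤ ∑ a ∈ S, l a * a k := hlk k
      _ = _ := by
        simp only [ite_mul, zero_mul]
        rw [Finset.sum_ite_mem, Finset.inter_eq_right.2 h]

lemma mem_vrs_of_mem {m : ℕ} {S : Finset (Fin m → ℝ)} {a : Fin m → ℝ} (ha : a ∈ S) :
    a ∈ vrs S := by
  refine ⟨fun b => if b = a then 1 else 0, fun b => by dsimp only; split <;> norm_num, ?_, fun k => ?_⟩
  · rw [Finset.sum_ite_eq' S a (fun _ => 1), if_pos ha]
  · simp only [ite_mul, one_mul, zero_mul]
    rw [Finset.sum_ite_eq' S a (fun b => b k), if_pos ha]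

lemma vrs_downward {m : ℕ} {S : Finset (Fin m → ℝ)} {y z : Fin m → ℝ}
    (hy : y ∈ vrs S) (hz : ∀ k, z k ≤ y k) : z ∈ vrs S := by
  obtain ⟨l, hl0, hl1, hlk⟩ := hy
  exact ⟨l, hl0, hl1, fun k => (hz k).trans (hlk k)⟩

lemma vrs_convex {m : ℕ} (S : Finset (Fin m → ℝ)) : Convex ℝ (vrs S) := by
  rintro x ⟨l, hl0, hl1, hlk⟩ y ⟨l', hl0', hl1', hlk'⟩ s t hs ht hst
  refine ⟨fun a => s * l a + t * l' a, fun a => add_nonneg (mul_nonneg hs (hl0 a)) (mul_nonneg ht (hl0' a)), ?_, fun k => ?_⟩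
  · rw [Finset.sum_add_distrib, ← Finset.mul_sum, ← Finset.mul_sum, hl1, hl1']
    simpa using hst
  · have : (s • x + t • y) k = s * x k + t * y k := rfl
    rw [this]
    have h1 : s * x k ≤ s * ∑ a ∈ S, l a * a k := by
      exact mul_le_mul_of_nonneg_left (hlk k) hs
    have h2 : t * y k ≤ t * ∑ a ∈ S, l' a * a k := by
      exact mul_le_mul_of_nonneg_left (hlk' k) ht
    calc s * x k + t * y k ≤ s * ∑ a ∈ S, l a * a k + t * ∑ a ∈ S, l' a * a k :=
          add_le_add h1 h2
      _ = ∑ a ∈ S, (s * l a + t * l' a) * a k := by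
          rw [Finset.mul_sum, Finset.mul_sum, ← Finset.sum_add_distrib]
          exact Finset.sum_congr rfl fun a _ => by ring

theorem stmt18 {m : ℕ} (hm : 0 < m) (A AS : Finset (Fin m → ℝ)) (hAS : AS ⊆ A) :
    frame A ⊆
      (AS.filter fun a => a ∈ frontier (vrs AS)) ∪
      ((A \ AS).filter fun b =>
        b ∉ vrs (AS.filter fun a => a ∈ frontier (vrs AS))) ∧
    (frame A).card ≤
      ((AS.filter fun a => a ∈ frontier (vrs AS)) ∪
      ((A \ AS).filter fun b =>
        b ∉ vrs (AS.filter fun a => a ∈ frontier (vrs AS)))).card := by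
  have hsub : frame A ⊆
      (AS.filter fun a => a ∈ frontier (vrs AS)) ∪
      ((A \ AS).filter fun b =>
        b ∉ vrs (AS.filter fun a => a ∈ frontier (vrs AS))) := by
    intro a ha
    rw [frame, Finset.mem_filter] at ha
    obtain ⟨haA, hext⟩ := ha
    by_cases haS : a ∈ AS
    · -- a is an extreme point of vrs A lying in AS; show it is on the frontier of vrs AS
      refine Finset.mem_union_left _ (Finset.mem_filter.2 ⟨haS, ?_⟩)
      rw [frontier]
      refine ⟨subset_closure (mem_vrs_of_mem haS), fun hint => ?_⟩
      -- a would be an interior point; contradict extremality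
      obtain ⟨ε, hε, hball⟩ := Metric.isOpen_iff.1 isOpen_interior a hint
      set i : Fin m := ⟨0, hm⟩
      set v : Fin m → ℝ := (ε / 2) • (Pi.single i 1 : Fin m → ℝ) with hv
      have hvnorm : ‖v‖ = ε / 2 := by
        rw [hv, norm_smul, Pi.norm_single, norm_one, mul_one, Real.norm_eq_abs,
          abs_of_pos (by positivity)]
      have hv0 : v ≠ 0 := by
        intro h
        have : ‖v‖ = 0 := by rw [h, norm_zero]
        rw [hvnorm] at this; linarith
      have h1 : a + v ∈ vrs A := by
        apply vrs_mono hAS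
        apply interior_subset
        apply hball
        simp only [Metric.mem_ball, dist_eq_norm]
        rw [show a + v - a = v by ring, hvnorm]; linarith
      have h2 : a - v ∈ vrs A := by
        apply vrs_mono hAS
        apply interior_subset
        apply hball
        simp only [Metric.mem_ball, dist_eq_norm]
        rw [show a - v - a = -v by ring, norm_neg, hvnorm]; linarith
      have hmem : a ∈ openSegment ℝ (a + v) (a - v) :=
        ⟨1/2, 1/2, by norm_num, by norm_num, by norm_num, by module⟩
      have h3 : a + v = a := hext.2 h1 h2 hmem
      exact hv0 (by rwa [add_eq_left] at h3)
    · -- a ∈ A \ AS; show a is exterior to vrs B^S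
      set B : Finset (Fin m → ℝ) := AS.filter fun a => a ∈ frontier (vrs AS) with hB
      refine Finset.mem_union_right _ (Finset.mem_filter.2 ⟨Finset.mem_sdiff.2 ⟨haA, haS⟩, ?_⟩)
      intro haB
      obtain ⟨l, hl0, hl1, hlk⟩ := haB
      set y : Fin m → ℝ := fun k => ∑ b ∈ B, l b * b k with hy
      have hBA : B ⊆ A := (Finset.filter_subset _ _).trans hAS
      have hyvec : y = ∑ b ∈ B, l b • b := by
        funext k
        rw [hy]
        simp [Finset.sum_apply]
      have hyhull : y ∈ convexHull ℝ (vrs A \ {a}) := by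
        rw [hyvec]
        have h01 : (0:ℝ) < ∑ b ∈ B, l b := by rw [hl1]; norm_num
        have := Finset.centerMass_mem_convexHull B (fun b _ => hl0 b) h01
          (s := vrs A \ {a}) (z := id) (fun b hb => ?_)
        · rw [Finset.centerMass, hl1, inv_one, one_smul] at this
          simpa using this
        · refine ⟨vrs_mono hBA (mem_vrs_of_mem hb), ?_⟩
          simp only [Set.mem_singleton_iff, id]
          rintro rfl
          exact haS (Finset.mem_filter.1 hb).1
      have hyA : y ∈ vrs A :=
        (convexHull_min (fun x hx => hx.1) (vrs_convex A)) hyhull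
      by_cases hya : y = a
      · -- a itself is a convex combination of points of vrs A other than a
        rw [(vrs_convex A).mem_extremePoints_iff_mem_diff_convexHull_diff] at hext
        exact hext.2 (hya ▸ hyhull)
      · -- a is the midpoint of y and 2a - y, both in vrs A
        have hz : (2 : ℝ) • a - y ∈ vrs A := by
          refine vrs_downward hyA fun k => ?_
          have h4 : a k ≤ y k := hlk k
          simp only [Pi.sub_apply, Pi.smul_apply, smul_eq_mul]
          linarith
        have hmem : a ∈ openSegment ℝ ((2:ℝ) • a - y) y :=
          ⟨1/2, 1/2, by norm_num, by norm_num, by norm_num, by module⟩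
        exact hya (hext.2 hyA hz (by rwa [openSegment_symm] at hmem))
  exact ⟨hsub, Finset.card_le_card hsub⟩
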